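/- Let ∼ be an equivalence relation on traces, let C₁, C₂ be channels from finite sets X₁, X₂ to finite trace sets Y₁, Y₂ respectively, let π be a prior on X₁×X₂, let S be a ∼-blind scheduler on Y₁, Y₂, let Obs be a deterministic ∼-observer on Int(Y₁,Y₂) with views the ∼-classes, and let Obs× be the deterministic observer on Y₁×Y₂ mapping each pair (y₁,y₂) to the pair of ∼-classes ([y₁]∼, [y₂]∼). Then the observed mutual information of the scheduled composition is at most that of the parallel composition: I(π, Comp_S(C₁,C₂)·Obs) ≤ I(π, (C₁×C₂)·Obs×). -/

import Mathlib

open scoped Classical BigOperators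

noncomputable section

/-- A (row-stochastic) channel matrix whose outputs range over a finite set `Ys`. -/
def FIsChannel {X B : Type*} (Ys : Finset B) (C : X → B → ℝ) : Prop :=
  (∀ x y, 0 ≤ C x y) ∧ ∀ x, ∑ y ∈ Ys, C x y = 1

/-- A prior (probability distribution). -/
def IsPrior {X : Type*} [Fintype X] (π : X → ℝ) : Prop :=
  (∀ x, 0 ≤ π x) ∧ ∑ x, π x = 1

/-- Cascade composition of channels (matrix product), outputs of the first ranging
over the finite set `Ys`. -/
def Fcascade {X B Z : Type*} (Ys : Finset B) (C : X → B → ℝ) (D : B → Z → ℝ) :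
    X → Z → ℝ :=
  fun x z => ∑ y ∈ Ys, C x y * D y z

/-- Mutual information (base-2), with `0`-probability terms taken to be `0`. -/
def FMI {X B : Type*} [Fintype X] (π : X → ℝ) (Ys : Finset B) (C : X → B → ℝ) : ℝ :=
  ∑ x, ∑ y ∈ Ys, if π x * C x y = 0 then 0
    else π x * C x y * Real.logb 2 (C x y / ∑ x', π x' * C x' y)

/-- Prior vulnerability. -/
def Vprior {X : Type*} [Fintype X] [Nonempty X] (π : X → ℝ) : ℝ :=
  Finset.univ.sup' Finset.univ_nonempty π

/-- Posterior vulnerability. -/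
def FVpost {X B : Type*} [Fintype X] [Nonempty X]
    (π : X → ℝ) (Ys : Finset B) (C : X → B → ℝ) : ℝ :=
  ∑ y ∈ Ys, Finset.univ.sup' Finset.univ_nonempty (fun x => π x * C x y)

/-- Min-entropy leakage. -/
def FMEL {X B : Type*} [Fintype X] [Nonempty X]
    (π : X → ℝ) (Ys : Finset B) (C : X → B → ℝ) : ℝ :=
  Real.logb 2 (FVpost π Ys C) - Real.logb 2 (Vprior π)

/-- Min-capacity: supremum of min-entropy leakage over all priors. -/
def FMinCap {X B : Type*} [Fintype X] [Nonempty X] (Ys : Finset B) (C : X → B → ℝ) : ℝ :=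
  sSup {l : ℝ | ∃ π : X → ℝ, IsPrior π ∧ l = FMEL π Ys C}

/-- All interleavings (shuffles) of two traces. -/
def interleavings {A : Type*} : List A → List A → List (List A)
  | [], ys => [ys]
  | x :: xs, [] => [x :: xs]
  | x :: xs, y :: ys =>
      ((interleavings xs (y :: ys)).map (x :: ·)) ++
        ((interleavings (x :: xs) ys).map (y :: ·))
termination_by l₁ l₂ => l₁.length + l₂.length

/-- The interleaving `Int(y₁, y₂)` of two traces, as a finite set. -/
def IntF {A : Type*} [DecidableEq A] (y₁ y₂ : List A) : Finset (List A) :=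
  (interleavings y₁ y₂).toFinset

/-- The interleaving `Int(Y₁, Y₂)` of two finite sets of traces. -/
def IntSet {A : Type*} [DecidableEq A] (Y₁ Y₂ : Finset (List A)) : Finset (List A) :=
  Y₁.biUnion fun y₁ => Y₂.biUnion fun y₂ => IntF y₁ y₂

/-- A scheduler on `Y₁`, `Y₂`: for each pair of traces it yields a probability
distribution supported on their interleavings. -/
def IsScheduler {A : Type*} [DecidableEq A] (Y₁ Y₂ : Finset (List A))
    (S : List A → List A → List A → ℝ) : Prop :=
  ∀ y₁ ∈ Y₁, ∀ y₂ ∈ Y₂,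
    (∀ y, 0 ≤ S y₁ y₂ y) ∧ (∀ y, y ∉ IntF y₁ y₂ → S y₁ y₂ y = 0) ∧
      ∑ y ∈ IntF y₁ y₂, S y₁ y₂ y = 1

/-- The scheduled composition of two channels with respect to a scheduler. -/
def Comp {A X₁ X₂ : Type*} (Y₁ Y₂ : Finset (List A))
    (C₁ : X₁ → List A → ℝ) (C₂ : X₂ → List A → ℝ)
    (S : List A → List A → List A → ℝ) : X₁ × X₂ → List A → ℝ :=
  fun x y => ∑ y₁ ∈ Y₁, ∑ y₂ ∈ Y₂, C₁ x.1 y₁ * C₂ x.2 y₂ * S y₁ y₂ y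

/-- The (disjoint) parallel composition of two channels. -/
def Par {A X₁ X₂ : Type*} (C₁ : X₁ → List A → ℝ) (C₂ : X₂ → List A → ℝ) :
    X₁ × X₂ → List A × List A → ℝ :=
  fun x y => C₁ x.1 y.1 * C₂ x.2 y.2

/-- A `∼`-blind scheduler: two pairs of component traces are componentwise
`∼`-equivalent iff the scheduled output distributions are
`∼`-indistinguishable. -/
def SimBlind {A : Type*} [DecidableEq A] (r : List A → List A → Prop)
    (Y₁ Y₂ : Finset (List A)) (S : List A → List A → List A → ℝ) : Prop :=
  ∀ y₁ ∈ Y₁, ∀ y₂ ∈ Y₂, ∀ y₁' ∈ Y₁, ∀ y₂' ∈ Y₂,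
    ((r y₁ y₁' ∧ r y₂ y₂') ↔
      ∀ t : List A,
        ∑ y ∈ (IntSet Y₁ Y₂).filter (fun y => r y t), S y₁ y₂ y =
          ∑ y ∈ (IntSet Y₁ Y₂).filter (fun y => r y t), S y₁' y₂' y)

/-- The deterministic `∼`-observer on traces, with views the `∼`-classes. -/
def detObs {A : Type*} (s : Setoid (List A)) : List A → Quotient s → ℝ :=
  fun y z => if z = Quotient.mk s y then 1 else 0

/-- The deterministic observer on pairs of traces mapping each pair to its pair
of `∼`-classes. -/
def detObsPair {A : Type*} (s : Setoid (List A)) :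
    List A × List A → Quotient s × Quotient s → ℝ :=
  fun p q => if q = (Quotient.mk s p.1, Quotient.mk s p.2) then 1 else 0

lemma logSum_ineq {ι : Type*} (t : Finset ι) (a b : ι → ℝ)
    (ha : ∀ i ∈ t, 0 ≤ a i) (hb : ∀ i ∈ t, 0 ≤ b i)
    (hba : ∀ i ∈ t, b i = 0 → a i = 0) :
    (∑ i ∈ t, a i) * Real.logb 2 ((∑ i ∈ t, a i) / (∑ i ∈ t, b i)) ≤
      ∑ i ∈ t, (if a i = 0 then 0 else a i * Real.logb 2 (a i / b i)) := by
  classical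
  set t' := t.filter (fun i => a i ≠ 0) with ht'
  have hsub : t' ⊆ t := Finset.filter_subset _ _
  have hA : ∑ i ∈ t, a i = ∑ i ∈ t', a i := (Finset.sum_filter_ne_zero t).symm
  have hRHS : ∑ i ∈ t, (if a i = 0 then 0 else a i * Real.logb 2 (a i / b i))
      = ∑ i ∈ t', a i * Real.logb 2 (a i / b i) := by
    rw [ht', Finset.sum_filter]
    refine Finset.sum_congr rfl fun i _ => ?_
    by_cases h : a i = 0 <;> simp [h]
  rw [hA, hRHS]
  by_cases hA0 : ∑ i ∈ t', a i = 0
  · have ht'e : t' = ∅ := by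
      by_contra h
      obtain ⟨i, hi⟩ := Finset.nonempty_iff_ne_empty.mpr h
      have hipos : 0 < a i := lt_of_le_of_ne (ha i (hsub hi)) (Ne.symm (Finset.mem_filter.mp hi).2)
      have : 0 < ∑ i ∈ t', a i :=
        Finset.sum_pos' (fun j hj => ha j (hsub hj)) ⟨i, hi, hipos⟩
      exact this.ne' hA0
    simp [hA0, ht'e]
  · have hapos : ∀ i ∈ t', 0 < a i := fun i hi =>
      (ha i (hsub hi)).lt_of_ne (Ne.symm (Finset.mem_filter.mp hi).2)
    have hbpos : ∀ i ∈ t', 0 < b i := fun i hi =>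
      (hb i (hsub hi)).lt_of_ne fun h => (Finset.mem_filter.mp hi).2 (hba i (hsub hi) h.symm)
    set A := ∑ i ∈ t', a i with hAdef
    set B := ∑ i ∈ t', b i with hBdef
    have hApos : 0 < A := lt_of_le_of_ne (Finset.sum_nonneg fun i hi => ha i (hsub hi)) (Ne.symm hA0)
    have ht'ne : t'.Nonempty := Finset.nonempty_of_sum_ne_zero hA0
    have hBpos : 0 < B := Finset.sum_pos hbpos ht'ne
    have hBle : B ≤ ∑ i ∈ t, b i :=
      Finset.sum_le_sum_of_subset_of_nonneg hsub (fun i hi _ => hb i hi)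
    have h1 : A * Real.logb 2 (A / ∑ i ∈ t, b i) ≤ A * Real.logb 2 (A / B) := by
      apply mul_le_mul_of_nonneg_left _ hApos.le
      have htb : 0 < ∑ i ∈ t, b i := lt_of_lt_of_le hBpos hBle
      exact Real.logb_le_logb_of_le one_lt_two (div_pos hApos htb) (by gcongr)
    refine h1.trans ?_
    -- Jensen
    have jensen := (strictConcaveOn_log_Ioi.concaveOn).le_map_sum
      (t := t') (w := fun i => a i / A) (p := fun i => b i / a i)
      (fun i hi => div_nonneg (hapos i hi).le hApos.le)
      (by rw [← Finset.sum_div]; field_simp; exact hAdef.symm)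
      (fun i hi => Set.mem_Ioi.mpr (div_pos (hbpos i hi) (hapos i hi)))
    have hpts : ∑ i ∈ t', (a i / A) • (b i / a i) = B / A := by
      rw [hBdef, Finset.sum_div]
      refine Finset.sum_congr rfl fun i hi => ?_
      have : a i ≠ 0 := (hapos i hi).ne'
      rw [smul_eq_mul, div_mul_div_comm, mul_comm (a i) (b i), mul_div_mul_right _ _ this]
    rw [hpts] at jensen
    have key : ∑ i ∈ t', a i * Real.log (b i / a i) ≤ A * Real.log (B / A) := by
      have := mul_le_mul_of_nonneg_left jensen hApos.le
      calc ∑ i ∈ t', a i * Real.log (b i / a i)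
          = A * ∑ i ∈ t', (a i / A) • Real.log (b i / a i) := by
            rw [Finset.mul_sum]
            refine Finset.sum_congr rfl fun i hi => ?_
            rw [smul_eq_mul]
            field_simp
        _ ≤ A * Real.log (B / A) := this
    have h2 : A * Real.log (A / B) ≤ ∑ i ∈ t', a i * Real.log (a i / b i) := by
      have e1 : A * Real.log (A / B) = -(A * Real.log (B / A)) := by
        rw [Real.log_div hApos.ne' hBpos.ne', Real.log_div hBpos.ne' hApos.ne']; ring
      have e2 : ∑ i ∈ t', a i * Real.log (a i / b i)
          = -∑ i ∈ t', a i * Real.log (b i / a i) := by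
        rw [← Finset.sum_neg_distrib]
        refine Finset.sum_congr rfl fun i hi => ?_
        rw [Real.log_div (hapos i hi).ne' (hbpos i hi).ne',
          Real.log_div (hbpos i hi).ne' (hapos i hi).ne']
        ring
      rw [e1, e2]
      exact neg_le_neg key
    have hlog2 : (0:ℝ) < Real.log 2 := Real.log_pos one_lt_two
    calc A * Real.logb 2 (A / B) = (A * Real.log (A / B)) / Real.log 2 := by
          rw [Real.logb]; ring
      _ ≤ (∑ i ∈ t', a i * Real.log (a i / b i)) / Real.log 2 := by gcongr
      _ = ∑ i ∈ t', a i * Real.logb 2 (a i / b i) := by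
          rw [Finset.sum_div]
          refine Finset.sum_congr rfl fun i _ => ?_
          rw [Real.logb, mul_div_assoc]


lemma FMI_cascade_le {X Q Z : Type*} [Fintype X] (π : X → ℝ) (hπ : ∀ x, 0 ≤ π x)
    (Qs : Finset Q) (Zs : Finset Z) (N : X → Q → ℝ) (hN : ∀ x q, 0 ≤ N x q)
    (K : Q → Z → ℝ) (hK0 : ∀ q ∈ Qs, ∀ z, 0 ≤ K q z)
    (hK1 : ∀ q ∈ Qs, ∑ z ∈ Zs, K q z = 1)
    (M : X → Z → ℝ) (hM : ∀ x, ∀ z ∈ Zs, M x z = ∑ q ∈ Qs, N x q * K q z) :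
    FMI π Zs M ≤ FMI π Qs N := by
  classical
  unfold FMI
  apply Finset.sum_le_sum
  intro x _
  set a : Q → Z → ℝ := fun q z => π x * N x q * K q z with hadef
  set bb : Q → Z → ℝ := fun q z => π x * (∑ x', π x' * N x' q) * K q z with hbdef
  have hPQ : ∀ q, 0 ≤ ∑ x', π x' * N x' q := fun q =>
    Finset.sum_nonneg fun x' _ => mul_nonneg (hπ x') (hN x' q)
  have hPQge : ∀ q, π x * N x q ≤ ∑ x', π x' * N x' q := fun q =>
    Finset.single_le_sum (fun x' _ => mul_nonneg (hπ x') (hN x' q)) (Finset.mem_univ x)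
  -- step A: identify LHS terms
  have stepA : ∀ z ∈ Zs,
      (if π x * M x z = 0 then 0
        else π x * M x z * Real.logb 2 (M x z / ∑ x', π x' * M x' z))
      = (∑ q ∈ Qs, a q z) * Real.logb 2 ((∑ q ∈ Qs, a q z) / (∑ q ∈ Qs, bb q z)) := by
    intro z hz
    have hsa : ∑ q ∈ Qs, a q z = π x * M x z := by
      rw [hM x z hz, Finset.mul_sum]
      exact Finset.sum_congr rfl fun q _ => by ring
    have hsb : ∑ q ∈ Qs, bb q z = π x * ∑ x', π x' * M x' z := by
      calc ∑ q ∈ Qs, bb q z = ∑ q ∈ Qs, ∑ x', π x * (π x' * N x' q * K q z) := by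
            refine Finset.sum_congr rfl fun q _ => ?_
            simp only [hbdef]
            rw [Finset.mul_sum, Finset.sum_mul]
            exact Finset.sum_congr rfl fun x' _ => by ring
        _ = ∑ x', ∑ q ∈ Qs, π x * (π x' * N x' q * K q z) := Finset.sum_comm
        _ = π x * ∑ x', π x' * M x' z := by
            rw [Finset.mul_sum]
            refine Finset.sum_congr rfl fun x' _ => ?_
            rw [hM x' z hz, Finset.mul_sum, Finset.mul_sum]
            exact Finset.sum_congr rfl fun q _ => by ring
    by_cases h0 : π x * M x z = 0
    · rw [if_pos h0, hsa, h0]; simp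
    · rw [if_neg h0, hsa, hsb]
      have hπx : π x ≠ 0 := fun h => h0 (by rw [h, zero_mul])
      rw [mul_div_mul_left _ _ hπx]
  -- step B
  have stepB : ∀ q ∈ Qs,
      (∑ z ∈ Zs, if a q z = 0 then 0 else a q z * Real.logb 2 (a q z / bb q z))
      = (if π x * N x q = 0 then 0
          else π x * N x q * Real.logb 2 (N x q / ∑ x', π x' * N x' q)) := by
    intro q hq
    by_cases h0 : π x * N x q = 0
    · rw [if_pos h0]
      exact Finset.sum_eq_zero fun z _ => by simp [hadef, h0]
    · rw [if_neg h0]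
      have hπx : π x ≠ 0 := fun h => h0 (by rw [h, zero_mul])
      have hterm : ∀ z ∈ Zs, (if a q z = 0 then 0 else a q z * Real.logb 2 (a q z / bb q z))
          = (π x * N x q * Real.logb 2 (N x q / ∑ x', π x' * N x' q)) * K q z := by
        intro z _
        by_cases hK : K q z = 0
        · simp [hadef, hK]
        · have ha0 : a q z ≠ 0 := mul_ne_zero h0 hK
          rw [if_neg ha0]
          have hratio : a q z / bb q z = N x q / ∑ x', π x' * N x' q := by
            show π x * N x q * K q z / ((π x * ∑ x', π x' * N x' q) * K q z) = _
            rw [mul_div_mul_right _ _ hK, mul_div_mul_left _ _ hπx]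
          rw [hratio]
          show π x * N x q * K q z * _ = _
          ring
      rw [Finset.sum_congr rfl hterm, ← Finset.mul_sum, hK1 q hq, mul_one]
  calc ∑ z ∈ Zs, (if π x * M x z = 0 then 0
        else π x * M x z * Real.logb 2 (M x z / ∑ x', π x' * M x' z))
      = ∑ z ∈ Zs, (∑ q ∈ Qs, a q z) * Real.logb 2 ((∑ q ∈ Qs, a q z) / (∑ q ∈ Qs, bb q z)) :=
        Finset.sum_congr rfl stepA
    _ ≤ ∑ z ∈ Zs, ∑ q ∈ Qs, (if a q z = 0 then 0 else a q z * Real.logb 2 (a q z / bb q z)) := by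
        apply Finset.sum_le_sum
        intro z hz
        apply logSum_ineq
        · exact fun q hq => mul_nonneg (mul_nonneg (hπ x) (hN x q)) (hK0 q hq z)
        · exact fun q hq => mul_nonneg (mul_nonneg (hπ x) (hPQ q)) (hK0 q hq z)
        · intro q hq hb0
          rcases mul_eq_zero.mp hb0 with h | h
          · rcases mul_eq_zero.mp h with h | h
            · simp [hadef, h]
            · have : π x * N x q = 0 := le_antisymm (h ▸ hPQge q) (mul_nonneg (hπ x) (hN x q))
              simp only [hadef]; rw [this, zero_mul]
          · simp [hadef, h]
    _ = ∑ q ∈ Qs, ∑ z ∈ Zs, (if a q z = 0 then 0 else a q z * Real.logb 2 (a q z / bb q z)) :=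
        Finset.sum_comm
    _ = ∑ q ∈ Qs, (if π x * N x q = 0 then 0
          else π x * N x q * Real.logb 2 (N x q / ∑ x', π x' * N x' q)) :=
        Finset.sum_congr rfl stepB

/-- under a `∼`-blind scheduler, the observed mutual information
of the scheduled composition (under the deterministic `∼`-observer) is at most
that of the parallel composition (under the componentwise `∼`-class observer). -/
theorem blind_scheduler_observed_MI_le_parallel
    {A X₁ X₂ : Type*} [DecidableEq A] [Fintype X₁] [Fintype X₂]
    (s : Setoid (List A))
    (Y₁ Y₂ : Finset (List A))
    (C₁ : X₁ → List A → ℝ) (C₂ : X₂ → List A → ℝ)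
    (hC₁ : FIsChannel Y₁ C₁) (hC₂ : FIsChannel Y₂ C₂)
    (π : X₁ × X₂ → ℝ) (hπ : IsPrior π)
    (S : List A → List A → List A → ℝ) (hS : IsScheduler Y₁ Y₂ S)
    (hblind : SimBlind (fun a b => s.r a b) Y₁ Y₂ S) :
    FMI π ((IntSet Y₁ Y₂).image (Quotient.mk s))
        (Fcascade (IntSet Y₁ Y₂) (Comp Y₁ Y₂ C₁ C₂ S) (detObs s)) ≤
      FMI π ((Y₁ ×ˢ Y₂).image (fun p => (Quotient.mk s p.1, Quotient.mk s p.2)))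
        (Fcascade (Y₁ ×ˢ Y₂) (Par C₁ C₂) (detObsPair s)) := by
  classical
  obtain ⟨hC₁0, hC₁1⟩ := hC₁
  obtain ⟨hC₂0, hC₂1⟩ := hC₂
  set f : List A × List A → Quotient s × Quotient s :=
    fun p => (Quotient.mk s p.1, Quotient.mk s p.2) with hfdef
  set Qs : Finset (Quotient s × Quotient s) := (Y₁ ×ˢ Y₂).image f with hQsdef
  set Zs : Finset (Quotient s) := (IntSet Y₁ Y₂).image (Quotient.mk s) with hZsdef
  set K : Quotient s × Quotient s → Quotient s → ℝ := fun q z =>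
    if h : ∃ p : List A × List A, p ∈ Y₁ ×ˢ Y₂ ∧ f p = q then
      ∑ y ∈ (IntSet Y₁ Y₂).filter (fun y => Quotient.mk s y = z), S h.choose.1 h.choose.2 y
    else 0 with hKdef
  have hIntF_sub : ∀ {y₁ y₂ : List A}, y₁ ∈ Y₁ → y₂ ∈ Y₂ → IntF y₁ y₂ ⊆ IntSet Y₁ Y₂ := by
    intro y₁ y₂ h₁ h₂ y hy
    exact Finset.mem_biUnion.mpr ⟨y₁, h₁, Finset.mem_biUnion.mpr ⟨y₂, h₂, hy⟩⟩
  have hSsum : ∀ y₁ ∈ Y₁, ∀ y₂ ∈ Y₂, ∑ y ∈ IntSet Y₁ Y₂, S y₁ y₂ y = 1 := by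
    intro y₁ h₁ y₂ h₂
    obtain ⟨hnn, hvan, hsum⟩ := hS y₁ h₁ y₂ h₂
    calc ∑ y ∈ IntSet Y₁ Y₂, S y₁ y₂ y = ∑ y ∈ IntF y₁ y₂, S y₁ y₂ y :=
          (Finset.sum_subset (hIntF_sub h₁ h₂) fun y _ hy => hvan y hy).symm
      _ = 1 := hsum
  have hKrep : ∀ p : List A × List A, p ∈ Y₁ ×ˢ Y₂ → ∀ z : Quotient s,
      K (f p) z = ∑ y ∈ (IntSet Y₁ Y₂).filter (fun y => Quotient.mk s y = z), S p.1 p.2 y := by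
    intro p hp z
    have hex : ∃ p' : List A × List A, p' ∈ Y₁ ×ˢ Y₂ ∧ f p' = f p := ⟨p, hp, rfl⟩
    rw [hKdef]
    simp only [dif_pos hex]
    obtain ⟨hp', hfp'⟩ := hex.choose_spec
    set p' := hex.choose with hp'def
    have h1 : p.1 ∈ Y₁ := (Finset.mem_product.mp hp).1
    have h2 : p.2 ∈ Y₂ := (Finset.mem_product.mp hp).2
    have h1' : p'.1 ∈ Y₁ := (Finset.mem_product.mp hp').1
    have h2' : p'.2 ∈ Y₂ := (Finset.mem_product.mp hp').2
    have he1 : Quotient.mk s p'.1 = Quotient.mk s p.1 := congrArg Prod.fst hfp'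
    have he2 : Quotient.mk s p'.2 = Quotient.mk s p.2 := congrArg Prod.snd hfp'
    have hr1 : s.r p.1 p'.1 := Setoid.symm (Quotient.exact he1)
    have hr2 : s.r p.2 p'.2 := Setoid.symm (Quotient.exact he2)
    have hbl := (hblind p.1 h1 p.2 h2 p'.1 h1' p'.2 h2').mp ⟨hr1, hr2⟩ z.out
    have hfilter : (IntSet Y₁ Y₂).filter (fun y => s.r y z.out)
        = (IntSet Y₁ Y₂).filter (fun y => Quotient.mk s y = z) := by
      apply Finset.filter_congr
      intro y _
      constructor
      · intro h
        calc Quotient.mk s y = Quotient.mk s z.out := Quotient.sound h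
          _ = z := Quotient.out_eq z
      · intro h
        exact Quotient.exact (h.trans (Quotient.out_eq z).symm)
    rw [hfilter] at hbl
    exact hbl.symm
  have hK0 : ∀ (q : Quotient s × Quotient s) (z : Quotient s), 0 ≤ K q z := by
    intro q z
    rw [hKdef]
    by_cases hex : ∃ p : List A × List A, p ∈ Y₁ ×ˢ Y₂ ∧ f p = q
    · simp only [dif_pos hex]
      obtain ⟨hp, _⟩ := hex.choose_spec
      have h1 : hex.choose.1 ∈ Y₁ := (Finset.mem_product.mp hp).1
      have h2 : hex.choose.2 ∈ Y₂ := (Finset.mem_product.mp hp).2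
      exact Finset.sum_nonneg fun y _ => (hS _ h1 _ h2).1 y
    · simp only [dif_neg hex, le_refl]
  have hK1 : ∀ q ∈ Qs, ∑ z ∈ Zs, K q z = 1 := by
    intro q hq
    obtain ⟨p, hp, hfp⟩ := Finset.mem_image.mp hq
    have h1 : p.1 ∈ Y₁ := (Finset.mem_product.mp hp).1
    have h2 : p.2 ∈ Y₂ := (Finset.mem_product.mp hp).2
    calc ∑ z ∈ Zs, K q z
        = ∑ z ∈ Zs, ∑ y ∈ (IntSet Y₁ Y₂).filter (fun y => Quotient.mk s y = z), S p.1 p.2 y :=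
          Finset.sum_congr rfl fun z _ => by rw [← hfp, hKrep p hp z]
      _ = ∑ y ∈ IntSet Y₁ Y₂, S p.1 p.2 y :=
          Finset.sum_fiberwise_of_maps_to (fun y hy => Finset.mem_image_of_mem _ hy) _
      _ = 1 := hSsum p.1 h1 p.2 h2
  set N : X₁ × X₂ → Quotient s × Quotient s → ℝ :=
    Fcascade (Y₁ ×ˢ Y₂) (Par C₁ C₂) (detObsPair s) with hNdef
  have hN0 : ∀ x q, 0 ≤ N x q := by
    intro x q
    apply Finset.sum_nonneg
    intro p _
    apply mul_nonneg (mul_nonneg (hC₁0 x.1 p.1) (hC₂0 x.2 p.2))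
    unfold detObsPair
    split <;> norm_num
  have hM : ∀ x : X₁ × X₂, ∀ z ∈ Zs,
      Fcascade (IntSet Y₁ Y₂) (Comp Y₁ Y₂ C₁ C₂ S) (detObs s) x z
        = ∑ q ∈ Qs, N x q * K q z := by
    intro x z _
    have lhs1 : Fcascade (IntSet Y₁ Y₂) (Comp Y₁ Y₂ C₁ C₂ S) (detObs s) x z
        = ∑ y ∈ (IntSet Y₁ Y₂).filter (fun y => Quotient.mk s y = z),
            Comp Y₁ Y₂ C₁ C₂ S x y := by
      unfold Fcascade detObs
      rw [Finset.sum_filter]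
      refine Finset.sum_congr rfl fun y _ => ?_
      by_cases h : Quotient.mk s y = z
      · rw [if_pos h, if_pos h.symm, mul_one]
      · rw [if_neg h, if_neg fun hh => h hh.symm, mul_zero]
    have lhs2 : ∑ y ∈ (IntSet Y₁ Y₂).filter (fun y => Quotient.mk s y = z),
          Comp Y₁ Y₂ C₁ C₂ S x y
        = ∑ p ∈ Y₁ ×ˢ Y₂, C₁ x.1 p.1 * C₂ x.2 p.2 *
            ∑ y ∈ (IntSet Y₁ Y₂).filter (fun y => Quotient.mk s y = z), S p.1 p.2 y := by
      unfold Comp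
      rw [Finset.sum_product]
      rw [Finset.sum_comm]
      refine Finset.sum_congr rfl fun y₁ _ => ?_
      rw [Finset.sum_comm]
      refine Finset.sum_congr rfl fun y₂ _ => ?_
      rw [Finset.mul_sum]
    have rhs1 : ∑ q ∈ Qs, N x q * K q z
        = ∑ p ∈ Y₁ ×ˢ Y₂, C₁ x.1 p.1 * C₂ x.2 p.2 * K (f p) z := by
      rw [hNdef]
      unfold Fcascade Par detObsPair
      calc ∑ q ∈ Qs, (∑ p ∈ Y₁ ×ˢ Y₂,
              C₁ x.1 p.1 * C₂ x.2 p.2 * if q = (Quotient.mk s p.1, Quotient.mk s p.2)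
                then 1 else 0) * K q z
          = ∑ q ∈ Qs, ∑ p ∈ Y₁ ×ˢ Y₂,
              (if q = f p then C₁ x.1 p.1 * C₂ x.2 p.2 * K q z else 0) := by
            refine Finset.sum_congr rfl fun q _ => ?_
            rw [Finset.sum_mul]
            refine Finset.sum_congr rfl fun p _ => ?_
            by_cases h : q = f p
            · rw [if_pos h, if_pos h, mul_one]
            · rw [if_neg h, if_neg h, mul_zero, zero_mul]
        _ = ∑ p ∈ Y₁ ×ˢ Y₂, ∑ q ∈ Qs,
              (if q = f p then C₁ x.1 p.1 * C₂ x.2 p.2 * K q z else 0) := Finset.sum_comm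
        _ = ∑ p ∈ Y₁ ×ˢ Y₂, C₁ x.1 p.1 * C₂ x.2 p.2 * K (f p) z := by
            refine Finset.sum_congr rfl fun p hp => ?_
            rw [Finset.sum_ite_eq' Qs (f p) (fun q => C₁ x.1 p.1 * C₂ x.2 p.2 * K q z),
              if_pos (Finset.mem_image_of_mem f hp)]
    rw [lhs1, lhs2, rhs1]
    refine Finset.sum_congr rfl fun p hp => ?_
    rw [hKrep p hp z]
  exact FMI_cascade_le π hπ.1 Qs Zs N hN0 K (fun q _ z => hK0 q z) hK1 _ hM
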